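/- Let p be a prime and g a primitive root mod p. The (p-1)×(p-1) left-circulant matrix K with first row (K(1)+p+1, K(g)+p+1, ..., K(g^{p-2})+p+1) satisfies |det K| = p^p; in particular K is invertible. -/

import Mathlib

/-- The Kloosterman sum over the prime field `F_p`. -/
noncomputable def kloosterman (p : ℕ) [Fact p.Prime] (u : ZMod p) : ℂ :=
  ∑ x ∈ (Finset.univ \ {0} : Finset (ZMod p)),
    Complex.exp (2 * Real.pi * Complex.I * ((x + u * x⁻¹).val : ℂ) / p)

open Finset Complex

namespace KA
variable {p : ℕ} [hp : Fact p.Prime]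

/-- powers of the generator indexed by `ZMod (p-1)` -/
def gpow (g : (ZMod p)ˣ) (m : ZMod (p - 1)) : (ZMod p)ˣ := g ^ m.val

lemma sum_nonzero (f : ZMod p → ℂ) :
    ∑ x ∈ univ \ {0}, f x = ∑ u : (ZMod p)ˣ, f u := by
  rw [eq_comm]
  refine Finset.sum_bij' (fun u _ => (u : ZMod p))
    (fun x hx => Units.mk0 x (by simpa using hx)) ?_ ?_ ?_ ?_ ?_ <;> intros <;> simp

variable [NeZero (p - 1)] {g : (ZMod p)ˣ} (hg : orderOf g = p - 1)
include hg

lemma gpow_natCast (m : ℕ) : gpow g ((m : ℕ) : ZMod (p-1)) = g ^ m := by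
  rw [gpow, ZMod.val_natCast, ← hg, pow_mod_orderOf]

lemma gpow_add (a b : ZMod (p-1)) : gpow g (a + b) = gpow g a * gpow g b := by
  have : ((a.val + b.val : ℕ) : ZMod (p-1)) = a + b := by
    push_cast [ZMod.natCast_zmod_val]; ring
  rw [← this, gpow_natCast hg, pow_add]; rfl

lemma gpow_zero : gpow g 0 = 1 := by
  simpa using gpow_natCast (g := g) hg 0

lemma gpow_neg (a : ZMod (p-1)) : gpow g (-a) = (gpow g a)⁻¹ := by
  have := gpow_add hg a (-a)
  rw [add_neg_cancel, gpow_zero hg] at this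
  rw [eq_inv_iff_mul_eq_one, mul_comm, ← this]

lemma gpow_inj : Function.Injective (gpow (p := p) g) := by
  intro a b h
  have := (pow_eq_pow_iff_modEq (x := g)).mp h
  rw [hg] at this
  have ha := a.val_lt; have hb := b.val_lt
  have : a.val = b.val := by
    rwa [Nat.ModEq, Nat.mod_eq_of_lt ha, Nat.mod_eq_of_lt hb] at this
  exact ZMod.val_injective _ this

lemma gpow_bij : Function.Bijective (gpow (p := p) g) := by
  rw [Fintype.bijective_iff_injective_and_card]
  refine ⟨gpow_inj hg, ?_⟩
  rw [ZMod.card, ZMod.card_units_eq_totient, Nat.totient_prime hp.out]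

lemma sum_nonzero' (f : ZMod p → ℂ) :
    ∑ x ∈ univ \ {0}, f x = ∑ m : ZMod (p-1), f (gpow g m) := by
  rw [sum_nonzero f, eq_comm]
  exact Fintype.sum_bijective _ (gpow_bij hg) _ _ (fun m => rfl)



omit hp [NeZero (p-1)] hg in
lemma conj_std {N : ℕ} [NeZero N] (z : ZMod N) :
    (starRingEnd ℂ) (ZMod.stdAddChar z) = ZMod.stdAddChar (-z) := by
  have h1 : ZMod.stdAddChar z * ZMod.stdAddChar (-z) = 1 := by
    rw [← AddChar.map_add_eq_mul]; simp
  have h2 : ZMod.stdAddChar z * (starRingEnd ℂ) (ZMod.stdAddChar z) = 1 := by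
    rw [Complex.mul_conj, ZMod.stdAddChar_apply]
    norm_cast
    simp [Complex.normSq_eq_norm_sq, Circle.norm_coe]
  have hz : ZMod.stdAddChar z ≠ 0 := by
    intro h; rw [h, zero_mul] at h1; exact zero_ne_one h1
  exact mul_left_cancel₀ hz (h2.trans h1.symm)

omit [NeZero (p-1)] hg in
lemma sum_std (b : ZMod p) :
    ∑ x : ZMod p, ZMod.stdAddChar (x * b) = if b = 0 then (p : ℂ) else 0 := by
  rw [AddChar.sum_mulShift b (ZMod.isPrimitive_stdAddChar p)]
  simp [ZMod.card p]

omit [NeZero (p-1)] hg in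
lemma kloosterman_eq (u : ZMod p) :
    kloosterman p u = ∑ x ∈ univ \ {0}, ZMod.stdAddChar (x + u * x⁻¹) := by
  refine Finset.sum_congr rfl fun x _ => ?_
  rw [ZMod.stdAddChar_apply, ZMod.toCircle_apply]

/-- the Gauss-type sum -/
noncomputable def tau (g : (ZMod p)ˣ) (k : ZMod (p-1)) : ℂ :=
  ∑ i : ZMod (p-1), ZMod.stdAddChar ((gpow g i : (ZMod p)ˣ) : ZMod p) * ZMod.stdAddChar (i * k)

lemma kloosterman_transform (k : ZMod (p-1)) :
    ∑ j : ZMod (p-1), kloosterman p ((gpow g j : (ZMod p)ˣ) : ZMod p) * ZMod.stdAddChar (j * k)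
      = tau g k ^ 2 := by
  have step1 : ∀ j : ZMod (p-1),
      kloosterman p ((gpow g j : (ZMod p)ˣ) : ZMod p)
        = ∑ i : ZMod (p-1),
            ZMod.stdAddChar ((gpow g i : (ZMod p)ˣ) : ZMod p)
              * ZMod.stdAddChar ((gpow g (j - i) : (ZMod p)ˣ) : ZMod p) := by
    intro j
    rw [kloosterman_eq, sum_nonzero' hg]
    refine Finset.sum_congr rfl fun i _ => ?_
    rw [← AddChar.map_add_eq_mul]
    congr 1
    have : (((gpow g i : (ZMod p)ˣ) : ZMod p))⁻¹ = ((gpow g i)⁻¹ : (ZMod p)ˣ) := by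
      rw [← ZMod.inv_coe_unit]
    rw [this]
    have : gpow g j * (gpow g i)⁻¹ = gpow g (j - i) := by
      rw [← gpow_neg hg, ← gpow_add hg]; ring_nf
    rw [← this]
    push_cast
    ring
  calc ∑ j : ZMod (p-1), kloosterman p ((gpow g j : (ZMod p)ˣ) : ZMod p) * ZMod.stdAddChar (j * k)
      = ∑ j : ZMod (p-1), ∑ i : ZMod (p-1),
          ZMod.stdAddChar ((gpow g i : (ZMod p)ˣ) : ZMod p)
            * ZMod.stdAddChar ((gpow g (j - i) : (ZMod p)ˣ) : ZMod p)
            * ZMod.stdAddChar (j * k) := by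
        refine Finset.sum_congr rfl fun j _ => ?_
        rw [step1, Finset.sum_mul]
    _ = ∑ i : ZMod (p-1), ∑ j : ZMod (p-1),
          ZMod.stdAddChar ((gpow g i : (ZMod p)ˣ) : ZMod p)
            * ZMod.stdAddChar ((gpow g j : (ZMod p)ˣ) : ZMod p)
            * ZMod.stdAddChar ((i + j) * k) := by
        rw [Finset.sum_comm]
        refine Finset.sum_congr rfl fun i _ => ?_
        rw [← Equiv.sum_comp (Equiv.addLeft i)]
        refine Finset.sum_congr rfl fun j _ => ?_
        simp only [Equiv.coe_addLeft]
        congr 2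
        · congr 1; ring
    _ = tau g k ^ 2 := by
        rw [tau, sq, Finset.sum_mul_sum]
        refine Finset.sum_congr rfl fun i _ => Finset.sum_congr rfl fun j _ => ?_
        rw [add_mul, AddChar.map_add_eq_mul]
        ring


omit hp [NeZero (p-1)] hg in
lemma sum_stdN (N : ℕ) [NeZero N] (b : ZMod N) :
    ∑ x : ZMod N, ZMod.stdAddChar (x * b) = if b = 0 then (N : ℂ) else 0 := by
  rw [AddChar.sum_mulShift b (ZMod.isPrimitive_stdAddChar N)]
  simp [ZMod.card N]

lemma sum_gpow :
    ∑ i : ZMod (p-1), ZMod.stdAddChar ((gpow g i : (ZMod p)ˣ) : ZMod p) = -1 := by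
  rw [← sum_nonzero' hg (fun x => ZMod.stdAddChar x)]
  have h0 : ∑ x ∈ (univ \ {0} : Finset (ZMod p)), ZMod.stdAddChar x
      = (∑ x : ZMod p, ZMod.stdAddChar x) - ZMod.stdAddChar (0 : ZMod p) := by
    rw [eq_sub_iff_add_eq, Finset.sum_sdiff_eq_sub (by simp), Finset.sum_singleton]
    ring
  rw [h0]
  have := sum_std (p := p) 1
  simp only [mul_one] at this
  rw [this]
  simp [one_ne_zero]

lemma sum_gpow_mul (c : ZMod p) :
    ∑ j : ZMod (p-1), ZMod.stdAddChar (((gpow g j : (ZMod p)ˣ) : ZMod p) * c)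
      = (if c = 0 then (p : ℂ) else 0) - 1 := by
  rw [← sum_nonzero' hg (fun x => ZMod.stdAddChar (x * c))]
  have h0 : ∑ x ∈ (univ \ {0} : Finset (ZMod p)), ZMod.stdAddChar (x * c)
      = (∑ x : ZMod p, ZMod.stdAddChar (x * c)) - ZMod.stdAddChar (0 * c) := by
    rw [eq_sub_iff_add_eq, Finset.sum_sdiff_eq_sub (by simp), Finset.sum_singleton]
    ring
  rw [h0, sum_std]
  simp

lemma tau_zero : tau g 0 = -1 := by
  rw [tau]
  simp only [mul_zero, AddChar.map_zero_eq_one, mul_one]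
  exact sum_gpow hg

lemma tau_mul_conj (k : ZMod (p-1)) (hk : k ≠ 0) :
    tau g k * (starRingEnd ℂ) (tau g k) = p := by
  rw [tau, map_sum]
  simp only [map_mul, conj_std]
  rw [Finset.sum_mul_sum]
  have key : ∀ i j : ZMod (p-1),
      ZMod.stdAddChar ((gpow g i : (ZMod p)ˣ) : ZMod p) * ZMod.stdAddChar (i * k) *
        (ZMod.stdAddChar (-((gpow g j : (ZMod p)ˣ) : ZMod p)) * ZMod.stdAddChar (-(j * k)))
      = ZMod.stdAddChar (((gpow g i : (ZMod p)ˣ) : ZMod p) - ((gpow g j : (ZMod p)ˣ) : ZMod p))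
          * ZMod.stdAddChar ((i - j) * k) := by
    intro i j
    simp only [sub_eq_add_neg, add_mul, neg_mul, AddChar.map_add_eq_mul]
    ring
  rw [Finset.sum_congr rfl (fun i _ => Finset.sum_congr rfl (fun j _ => key i j))]
  calc ∑ i : ZMod (p-1), ∑ j : ZMod (p-1),
        ZMod.stdAddChar (((gpow g i : (ZMod p)ˣ) : ZMod p) - ((gpow g j : (ZMod p)ˣ) : ZMod p))
          * ZMod.stdAddChar ((i - j) * k)
      = ∑ j : ZMod (p-1), ∑ d : ZMod (p-1),
          ZMod.stdAddChar (((gpow g j : (ZMod p)ˣ) : ZMod p) * (((gpow g d : (ZMod p)ˣ) : ZMod p) - 1))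
            * ZMod.stdAddChar (d * k) := by
        rw [Finset.sum_comm]
        refine Finset.sum_congr rfl fun j _ => ?_
        rw [← Equiv.sum_comp (Equiv.addLeft j)]
        refine Finset.sum_congr rfl fun d _ => ?_
        simp only [Equiv.coe_addLeft]
        congr 2
        · rw [gpow_add hg]
          push_cast
          ring
        · congr 1; ring
    _ = ∑ d : ZMod (p-1),
          ZMod.stdAddChar (d * k) *
            ((if (((gpow g d : (ZMod p)ˣ) : ZMod p) - 1) = 0 then (p : ℂ) else 0) - 1) := by
        rw [Finset.sum_comm]
        refine Finset.sum_congr rfl fun d _ => ?_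
        rw [← Finset.sum_mul, sum_gpow_mul hg, mul_comm]
    _ = (p : ℂ) := by
        have hcrit : ∀ d : ZMod (p-1),
            (((gpow g d : (ZMod p)ˣ) : ZMod p) - 1 = 0) ↔ d = 0 := by
          intro d
          rw [sub_eq_zero]
          constructor
          · intro h
            apply gpow_inj hg
            rw [gpow_zero hg]
            exact Units.ext h
          · intro h; rw [h, gpow_zero hg]; rfl
        simp only [hcrit]
        rw [Finset.sum_congr rfl (fun d _ => by rw [mul_sub, mul_one])]
        rw [Finset.sum_sub_distrib]
        have h1 : ∑ d : ZMod (p-1), ZMod.stdAddChar (d * k) * (if d = (0 : ZMod (p-1)) then (p:ℂ) else 0)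
            = (p : ℂ) := by
          rw [Finset.sum_eq_single 0]
          · simp
          · intro b _ hb; simp [hb]
          · simp
        rw [h1, sum_stdN (p-1) k, if_neg hk, sub_zero]


/-- first-row entries -/
noncomputable def ent (g : (ZMod p)ˣ) (m : ZMod (p-1)) : ℂ :=
  kloosterman p ((gpow g m : (ZMod p)ˣ) : ZMod p) + p + 1

/-- eigenvalues -/
noncomputable def lam (g : (ZMod p)ˣ) (k : ZMod (p-1)) : ℂ :=
  ∑ t : ZMod (p-1), ent g t * ZMod.stdAddChar (t * k)

noncomputable def Fm : Matrix (ZMod (p-1)) (ZMod (p-1)) ℂ :=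
  Matrix.of fun s k => ZMod.stdAddChar (s * k)

noncomputable def Mm (g : (ZMod p)ˣ) : Matrix (ZMod (p-1)) (ZMod (p-1)) ℂ :=
  Matrix.of fun s l => ent g (s + l)

omit hg in
lemma FMF : Fm * Mm g * Fm
    = (((p-1 : ℕ) : ℂ)) • Matrix.diagonal (lam g) := by
  ext k k'
  rw [Matrix.mul_apply]
  simp only [Matrix.mul_apply, Fm, Mm, Matrix.of_apply]
  calc ∑ l : ZMod (p-1), (∑ s : ZMod (p-1), ZMod.stdAddChar (k * s) * ent g (s + l))
          * ZMod.stdAddChar (l * k')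
      = ∑ l : ZMod (p-1), ∑ t : ZMod (p-1),
          (ent g t * ZMod.stdAddChar (t * k)) * ZMod.stdAddChar (l * (k' - k)) := by
        refine Finset.sum_congr rfl fun l _ => ?_
        rw [Finset.sum_mul, ← Equiv.sum_comp (Equiv.subRight l)
          (fun s => ZMod.stdAddChar (k * s) * ent g (s + l) * ZMod.stdAddChar (l * k'))]
        refine Finset.sum_congr rfl fun t _ => ?_
        rw [show (Equiv.subRight l) t = t - l from rfl, sub_add_cancel]
        have h1 : k * (t - l) = t * k + l * (k' - k) - l * k' := by ring
        rw [h1, sub_eq_add_neg, AddChar.map_add_eq_mul, AddChar.map_add_eq_mul]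
        have h2 : ZMod.stdAddChar (-(l * k')) * ZMod.stdAddChar (l * k') = 1 := by
          rw [← AddChar.map_add_eq_mul]; simp
        linear_combination (ZMod.stdAddChar (t * k) * ZMod.stdAddChar (l * (k' - k)) * ent g t) * h2
    _ = lam g k * ∑ l : ZMod (p-1), ZMod.stdAddChar (l * (k' - k)) := by
        rw [Finset.sum_comm, lam, Finset.sum_mul]
        exact Finset.sum_congr rfl fun t _ => by rw [← Finset.mul_sum]
    _ = (((p-1 : ℕ) : ℂ)) • Matrix.diagonal (lam g) k k' := by
        rw [sum_stdN]
        by_cases h : k = k'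
        · subst h; rw [sub_self, if_pos rfl, Matrix.diagonal_apply_eq, smul_eq_mul]; ring
        · rw [if_neg (fun hc => h (sub_eq_zero.mp hc).symm), Matrix.diagonal_apply_ne _ h,
            smul_zero, mul_zero]

omit hp hg in
set_option linter.unusedSectionVars false in
lemma FFH : Fm (p := p) * Fm.conjTranspose = (((p-1 : ℕ) : ℂ)) • 1 := by
  ext k k'
  simp only [Matrix.mul_apply, Matrix.conjTranspose_apply, Fm, Matrix.of_apply]
  calc ∑ s : ZMod (p-1), ZMod.stdAddChar (k * s) * star (ZMod.stdAddChar (k' * s))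
      = ∑ s : ZMod (p-1), ZMod.stdAddChar (s * (k - k')) := by
        refine Finset.sum_congr rfl fun s _ => ?_
        rw [RCLike.star_def, conj_std, ← AddChar.map_add_eq_mul]
        congr 1; ring
    _ = (((p-1 : ℕ) : ℂ)) • (1 : Matrix (ZMod (p-1)) (ZMod (p-1)) ℂ) k k' := by
        rw [sum_stdN]
        by_cases h : k = k'
        · subst h; rw [sub_self, if_pos rfl, Matrix.one_apply_eq, smul_eq_mul, mul_one]
        · rw [if_neg (fun hc => h (sub_eq_zero.mp hc)), Matrix.one_apply_ne h, smul_zero]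

lemma lam_eq (k : ZMod (p-1)) :
    lam g k = tau g k ^ 2 + ((p : ℂ) + 1) * (if k = 0 then ((p-1 : ℕ) : ℂ) else 0) := by
  rw [lam, ← kloosterman_transform hg k]
  rw [Finset.sum_congr rfl (fun t _ => by
    rw [ent, add_mul, add_mul, add_assoc] :
    ∀ t ∈ univ, ent g t * ZMod.stdAddChar (t * k) =
      kloosterman p ((gpow g t : (ZMod p)ˣ) : ZMod p) * ZMod.stdAddChar (t * k)
        + ((p : ℂ) * ZMod.stdAddChar (t * k) + 1 * ZMod.stdAddChar (t * k)))]
  rw [Finset.sum_add_distrib, Finset.sum_add_distrib, ← Finset.mul_sum]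
  simp only [one_mul]
  rw [sum_stdN]
  ring

lemma abs_lam_zero : ‖lam g 0‖ = (p : ℝ) ^ 2 := by
  rw [lam_eq hg, if_pos rfl, tau_zero hg]
  have hp1 : ((p - 1 : ℕ) : ℂ) = (p : ℂ) - 1 := by
    push_cast [Nat.cast_sub hp.out.one_le]; ring
  rw [hp1]
  have : (-1 : ℂ) ^ 2 + ((p : ℂ) + 1) * ((p : ℂ) - 1) = (p : ℂ) ^ 2 := by ring
  rw [this]
  rw [← Complex.ofReal_natCast, ← Complex.ofReal_pow]
  norm_cast

lemma abs_lam_ne (k : ZMod (p-1)) (hk : k ≠ 0) : ‖lam g k‖ = (p : ℝ) := by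
  rw [lam_eq hg, if_neg hk, mul_zero, add_zero]
  have h := tau_mul_conj hg k hk
  rw [Complex.mul_conj] at h
  have habs : Complex.normSq (tau g k) = (p : ℝ) := by
    exact_mod_cast h
  rw [norm_pow, Complex.sq_norm, habs]


lemma prod_abs_lam : ∏ k : ZMod (p-1), ‖lam g k‖ = (p : ℝ) ^ p := by
  rw [← Finset.mul_prod_erase univ _ (Finset.mem_univ (0 : ZMod (p-1))), abs_lam_zero hg]
  rw [Finset.prod_congr rfl (fun k hk => abs_lam_ne hg k (Finset.mem_erase.mp hk).1)]
  rw [Finset.prod_const, Finset.card_erase_of_mem (Finset.mem_univ _), Finset.card_univ,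
    ZMod.card, ← pow_add]
  congr 1
  have h2 : 2 ≤ p := hp.out.two_le
  omega

lemma abs_det_M : ‖Matrix.det (Mm g)‖ = (p : ℝ) ^ p := by
  have h1 := congrArg Matrix.det (FMF (g := g))
  rw [Matrix.det_mul, Matrix.det_mul, Matrix.det_smul, Matrix.det_diagonal] at h1
  have h2 := congrArg Matrix.det (FFH (p := p))
  rw [Matrix.det_mul, Matrix.det_conjTranspose, Matrix.det_smul, Matrix.det_one, mul_one] at h2
  have card_eq : Fintype.card (ZMod (p-1)) = p - 1 := ZMod.card _
  have habsF : ‖(Fm (p := p)).det‖ ^ 2 = ((p-1 : ℕ) : ℝ) ^ (p-1) := by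
    have := congrArg (‖·‖) h2
    rwa [norm_mul, show (star (Fm (p := p)).det) = (starRingEnd ℂ) (Fm (p := p)).det from rfl,
      Complex.norm_conj, ← sq, norm_pow, Complex.norm_natCast, card_eq] at this
  have habs1 := congrArg (‖·‖) h1
  simp only [norm_mul, norm_pow, norm_prod, Complex.norm_natCast, card_eq, prod_abs_lam hg]
    at habs1
  have e1 : ‖(Fm (p := p)).det‖ ^ 2 * ‖Matrix.det (Mm g)‖
      = ((p-1 : ℕ) : ℝ) ^ (p-1) * ((p : ℝ) ^ p) := by
    rw [sq]; linear_combination habs1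
  rw [habsF] at e1
  have hpos : (0 : ℝ) < ((p-1 : ℕ) : ℝ) ^ (p-1) := by
    have : 0 < p - 1 := by have := hp.out.two_le; omega
    positivity
  exact mul_left_cancel₀ (ne_of_gt hpos) e1

end KA

open KA in
theorem abs_det_shifted_kloosterman_circulant (p : ℕ) [Fact p.Prime] (g : (ZMod p)ˣ)
    (hg : orderOf g = p - 1) :
    ‖Matrix.det (Matrix.of fun s l : Fin (p - 1) =>
        kloosterman p ((g : ZMod p) ^ ((s.val + l.val) % (p - 1))) + p + 1)‖ = (p : ℝ) ^ p ∧
    IsUnit (Matrix.of fun s l : Fin (p - 1) =>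
        kloosterman p ((g : ZMod p) ^ ((s.val + l.val) % (p - 1))) + p + 1) := by
  haveI : NeZero (p - 1) := ⟨Nat.sub_ne_zero_of_lt (Fact.out : p.Prime).one_lt⟩
  set φ : Fin (p-1) ≃ ZMod (p-1) :=
    { toFun := fun i => (i.val : ZMod (p-1))
      invFun := fun z => ⟨z.val, z.val_lt⟩
      left_inv := fun i => by
        ext
        simp [ZMod.val_natCast, Nat.mod_eq_of_lt i.isLt]
      right_inv := fun z => by simp [ZMod.natCast_zmod_val] } with hφ
  have hval : ∀ i : Fin (p-1), (φ i).val = i.val := fun i => by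
    simp [hφ, ZMod.val_natCast, Nat.mod_eq_of_lt i.isLt]
  have hmat : (Matrix.of fun s l : Fin (p - 1) =>
      kloosterman p ((g : ZMod p) ^ ((s.val + l.val) % (p - 1))) + p + 1)
      = (Mm g).submatrix φ φ := by
    ext s l
    simp only [Matrix.submatrix_apply, Mm, Matrix.of_apply, ent]
    have harg : ((g : ZMod p)) ^ ((s.val + l.val) % (p - 1))
        = ((gpow g (φ s + φ l) : (ZMod p)ˣ) : ZMod p) := by
      rw [gpow, ← Units.val_pow_eq_pow_val]
      congr 2
      rw [ZMod.val_add, hval, hval]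
    rw [harg]
  have hdet : ‖Matrix.det (Matrix.of fun s l : Fin (p - 1) =>
      kloosterman p ((g : ZMod p) ^ ((s.val + l.val) % (p - 1))) + p + 1)‖ = (p : ℝ) ^ p := by
    rw [hmat, Matrix.det_submatrix_equiv_self, abs_det_M hg]
  refine ⟨hdet, ?_⟩
  rw [Matrix.isUnit_iff_isUnit_det, isUnit_iff_ne_zero]
  intro h0
  rw [h0, norm_zero] at hdet
  have : (0 : ℝ) < (p : ℝ) ^ p := by
    have := (Fact.out : p.Prime).pos
    positivity
  rw [← hdet] at this
  exact lt_irrefl 0 this
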